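/- Let y_0 = Σ_{n ∈ ℕ^r} c_n x^n ∈ ℚ[[x_1,...,x_r]] be a multivariate power series algebraic over ℚ(x_1,...,x_r). Then there exist positive integers δ_0 and δ such that for every n ∈ ℕ^r, the rational number δ_0 · δ^{|n|} · c_n is an integer (multivariate Eisenstein theorem). -/

import Mathlib

/-- Base-(h+1) digit uniqueness. -/
lemma eis_digits (h : ℕ) : ∀ (r : ℕ) (f g : Fin r → ℕ), (∀ i, f i ≤ h) → (∀ i, g i ≤ h) →
    (∑ i, f i * (h+1)^(i:ℕ)) = (∑ i, g i * (h+1)^(i:ℕ)) → f = g := by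
  intro r
  induction r with
  | zero => intro f g _ _ _; funext i; exact i.elim0
  | succ n ih =>
    have e : ∀ (f : Fin (n+1) → ℕ), (∑ i, f i * (h+1)^(i:ℕ))
        = f 0 + (h+1) * ∑ i : Fin n, f i.succ * (h+1)^(i:ℕ) := by
      intro f
      rw [Fin.sum_univ_succ, Finset.mul_sum]
      simp only [Fin.val_zero, pow_zero, mul_one, Fin.val_succ, pow_succ]
      congr 1
      refine Finset.sum_congr rfl fun i _ => by ring
    intro f g hf hg hsum
    rw [e f, e g] at hsum
    have h0 : f 0 = g 0 := by
      have m1 : (f 0 + (h+1) * ∑ i : Fin n, f i.succ * (h+1)^(i:ℕ)) % (h+1)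
          = (g 0 + (h+1) * ∑ i : Fin n, g i.succ * (h+1)^(i:ℕ)) % (h+1) := by rw [hsum]
      rw [Nat.add_mul_mod_self_left, Nat.add_mul_mod_self_left,
        Nat.mod_eq_of_lt (Nat.lt_succ_of_le (hf 0)), Nat.mod_eq_of_lt (Nat.lt_succ_of_le (hg 0))] at m1
      exact m1
    have htail : (fun i : Fin n => f i.succ) = (fun i => g i.succ) := by
      apply ih _ _ (fun i => hf _) (fun i => hg _)
      have hmm : (h+1) * (∑ i : Fin n, f i.succ * (h+1)^(i:ℕ))
          = (h+1) * (∑ i : Fin n, g i.succ * (h+1)^(i:ℕ)) := by omega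
      exact Nat.eq_of_mul_eq_mul_left (Nat.succ_pos h) hmm
    funext i
    refine Fin.cases h0 (fun j => ?_) i
    exact congrFun htail j

/-- Integer sums. -/
lemma eis_int_sum {α : Type*} (s : Finset α) (f : α → ℚ) (C : ℚ)
    (h : ∀ x ∈ s, ∃ t : ℤ, f x = C * t) : ∃ t : ℤ, ∑ x ∈ s, f x = C * t := by
  classical
  induction s using Finset.induction_on with
  | empty => exact ⟨0, by simp⟩
  | insert _ _ hx ih =>
    obtain ⟨t1, ht1⟩ := h _ (Finset.mem_insert_self _ _)
    obtain ⟨t2, ht2⟩ := ih (fun x hx => h x (Finset.mem_insert_of_mem hx))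
    exact ⟨t1 + t2, by rw [Finset.sum_insert hx, ht1, ht2]; push_cast; ring⟩

lemma eis_den_dvd (x : ℚ) (k : ℕ) (h : x.den ∣ k) : ∃ t : ℤ, (k:ℚ) * x = t := by
  obtain ⟨c, rfl⟩ := h
  exact ⟨c * x.num, by push_cast; rw [mul_assoc, mul_comm (c:ℚ), ← mul_assoc, Rat.den_mul_eq_num]; ring⟩

lemma eis_finite (r B : ℕ) : ({ν : Fin r →₀ ℕ | ∀ i, ν i ≤ B}).Finite := by
  have h : {ν : Fin r →₀ ℕ | ∀ i, ν i ≤ B} ⊆ Set.Iic (Finsupp.equivFunOnFinite.symm (fun _ => B)) :=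
    fun ν hν i => by simpa using hν i
  exact (Set.finite_Iic _).subset h

open MvPowerSeries

/-- weight of a multi-index -/
def eWt {r : ℕ} (w : Fin r → ℕ) (ν : Fin r →₀ ℕ) : ℕ := ∑ i, w i * ν i

lemma eWt_add {r : ℕ} (w : Fin r → ℕ) (a b : Fin r →₀ ℕ) :
    eWt w (a + b) = eWt w a + eWt w b := by
  simp only [eWt, Finsupp.add_apply, mul_add]
  rw [Finset.sum_add_distrib]

/-- order bound for powers of `z`. -/
lemma eis_order {r : ℕ} (w : Fin r → ℕ) (z : MvPowerSeries (Fin r) ℚ) (B : ℕ)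
    (hz : ∀ ν, eWt w ν ≤ B → coeff ν z = 0) :
    ∀ (i : ℕ) (ν), eWt w ν < i * (B+1) → coeff ν (z ^ i) = 0 := by
  intro i
  induction i with
  | zero => intro ν hν; omega
  | succ n ih =>
    intro ν hν
    rw [pow_succ, mul_comm (z^n) z, coeff_mul]
    refine Finset.sum_eq_zero fun p hp => ?_
    have hadd : eWt w p.1 + eWt w p.2 = eWt w ν := by
      rw [← eWt_add]; rw [Finset.HasAntidiagonal.mem_antidiagonal] at hp; rw [hp]
    by_cases h1 : eWt w p.1 ≤ B
    · rw [hz p.1 h1, zero_mul]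
    · have hexp : (n+1) * (B+1) = n*(B+1) + (B+1) := by ring
      rw [ih p.2 (by omega), mul_zero]

/-- denominator bound for powers of `z`. -/
lemma eis_pow {r : ℕ} (w : Fin r → ℕ) (z : MvPowerSeries (Fin r) ℚ) (E H m : ℕ)
    (hE : 1 ≤ E)
    (hz : ∀ ν, eWt w ν ≤ 2*H+1 → coeff ν z = 0)
    (IH : ∀ b, eWt w b < m → ∃ t : ℤ, (E:ℚ)^(eWt w b) * coeff b z = (E:ℚ)^(H+1) * t) :
    ∀ i, 2 ≤ i → ∀ b, eWt w b ≤ m + H →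
      ∃ s : ℤ, (E:ℚ)^(eWt w b) * coeff b (z^i) = (E:ℚ)^((H+1)*i) * s := by
  intro i hi2
  induction i, hi2 using Nat.le_induction with
  | base =>
    intro b hb
    rw [pow_two, coeff_mul]
    rw [Finset.mul_sum]
    apply eis_int_sum
    intro p hp
    rw [Finset.HasAntidiagonal.mem_antidiagonal] at hp
    have hadd : eWt w p.1 + eWt w p.2 = eWt w b := by rw [← eWt_add, hp]
    by_cases h1 : eWt w p.1 ≤ 2*H+1
    · exact ⟨0, by rw [hz p.1 h1]; push_cast; ring⟩
    by_cases h2 : eWt w p.2 ≤ 2*H+1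
    · exact ⟨0, by rw [hz p.2 h2]; push_cast; ring⟩
    obtain ⟨t1, ht1⟩ := IH p.1 (by omega)
    obtain ⟨t2, ht2⟩ := IH p.2 (by omega)
    refine ⟨t1 * t2, ?_⟩
    have : (E:ℚ)^(eWt w b) = (E:ℚ)^(eWt w p.1) * (E:ℚ)^(eWt w p.2) := by
      rw [← pow_add, hadd]
    rw [this]
    calc (E:ℚ)^(eWt w p.1) * (E:ℚ)^(eWt w p.2) * (coeff p.1 z * coeff p.2 z)
        = ((E:ℚ)^(eWt w p.1) * coeff p.1 z) * ((E:ℚ)^(eWt w p.2) * coeff p.2 z) := by ring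
      _ = ((E:ℚ)^(H+1) * t1) * ((E:ℚ)^(H+1) * t2) := by rw [ht1, ht2]
      _ = (E:ℚ)^((H+1)*2) * (t1 * t2 : ℤ) := by push_cast; ring
  | succ i hi ihp =>
    intro b hb
    rw [pow_succ, mul_comm (z^i) z, coeff_mul, Finset.mul_sum]
    apply eis_int_sum
    intro p hp
    rw [Finset.HasAntidiagonal.mem_antidiagonal] at hp
    have hadd : eWt w p.1 + eWt w p.2 = eWt w b := by rw [← eWt_add, hp]
    by_cases h1 : eWt w p.1 ≤ 2*H+1
    · exact ⟨0, by rw [hz p.1 h1]; push_cast; ring⟩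
    by_cases h2 : eWt w p.2 < i * (2*H+1+1)
    · exact ⟨0, by rw [eis_order w z (2*H+1) hz i p.2 (by omega)]; push_cast; ring⟩
    have hlt : eWt w p.1 < m := by nlinarith [hadd, hb, h2, hi]
    obtain ⟨t1, ht1⟩ := IH p.1 hlt
    obtain ⟨s, hs⟩ := ihp p.2 (by omega)
    refine ⟨t1 * s, ?_⟩
    have : (E:ℚ)^(eWt w b) = (E:ℚ)^(eWt w p.1) * (E:ℚ)^(eWt w p.2) := by
      rw [← pow_add, hadd]
    rw [this]
    calc (E:ℚ)^(eWt w p.1) * (E:ℚ)^(eWt w p.2) * (coeff p.1 z * coeff p.2 (z^i))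
        = ((E:ℚ)^(eWt w p.1) * coeff p.1 z) * ((E:ℚ)^(eWt w p.2) * coeff p.2 (z^i)) := by ring
      _ = ((E:ℚ)^(H+1) * t1) * ((E:ℚ)^((H+1)*i) * s) := by rw [ht1, hs]
      _ = (E:ℚ)^((H+1)*(i+1)) * (t1 * s : ℤ) := by
            have hexp : (E:ℚ)^((H+1)*(i+1)) = (E:ℚ)^(H+1) * (E:ℚ)^((H+1)*i) := by
              rw [← pow_add]; congr 1; ring
            rw [hexp]; push_cast; ring

open MvPowerSeries Polynomial Finset

/-- **Multivariate Eisenstein theorem (Safonov).**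
Let `y₀ = Σ_{n ∈ ℕ^r} c_n x^n ∈ ℚ[[x₁,…,x_r]]` be a multivariate power series algebraic
over `ℚ(x₁,…,x_r)`, i.e. `P(x, y₀) = 0` for some nonzero `P ∈ ℚ[x₁,…,x_r][y]`.  Then
there exist positive integers `δ₀` and `δ` such that `δ₀·δ^{|n|}·c_n ∈ ℤ` for every
`n ∈ ℕ^r`. -/
theorem multivariate_eisenstein (r : ℕ) (y0 : MvPowerSeries (Fin r) ℚ)
    (halg : ∃ P : Polynomial (MvPolynomial (Fin r) ℚ), P ≠ 0 ∧
      Polynomial.eval₂ MvPolynomial.coeToMvPowerSeries.ringHom y0 P = 0) :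
    ∃ δ0 δ : ℕ, 0 < δ0 ∧ 0 < δ ∧ ∀ n : Fin r →₀ ℕ,
      ∃ z : ℤ, (δ0 : ℚ) * (δ : ℚ) ^ (∑ i, n i) * MvPowerSeries.coeff n y0 = z := by
  classical
  obtain ⟨P0, hP0ne, hP0⟩ := halg
  -- choose an annihilating polynomial of minimal degree
  set co : MvPolynomial (Fin r) ℚ →+* MvPowerSeries (Fin r) ℚ :=
    MvPolynomial.coeToMvPowerSeries.ringHom with hco
  have hSne : ({d | ∃ P : Polynomial (MvPolynomial (Fin r) ℚ),
      P ≠ 0 ∧ Polynomial.eval₂ co y0 P = 0 ∧ P.natDegree = d} : Set ℕ).Nonempty :=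
    ⟨P0.natDegree, P0, hP0ne, hP0, rfl⟩
  obtain ⟨M, hMne, hM0, hMdeg⟩ := Nat.sInf_mem hSne
  have hmin : ∀ P : Polynomial (MvPolynomial (Fin r) ℚ), P ≠ 0 →
      Polynomial.eval₂ co y0 P = 0 → M.natDegree ≤ P.natDegree := by
    intro P h1 h2
    rw [hMdeg]
    exact Nat.sInf_le ⟨P, h1, h2, rfl⟩
  have hMdeg1 : M.natDegree ≠ 0 := by
    intro hd
    obtain ⟨a, ha⟩ := Polynomial.natDegree_eq_zero.mp hd
    rw [← ha, Polynomial.eval₂_C] at hM0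
    have ha0 : a = 0 := by
      have : ∀ ν, MvPolynomial.coeff ν a = 0 := by
        intro ν
        have := congrArg (MvPowerSeries.coeff ν) hM0
        rwa [hco, MvPolynomial.coeToMvPowerSeries.ringHom_apply, MvPolynomial.coeff_coe,
          map_zero] at this
      exact MvPolynomial.ext _ _ fun ν => by rw [this ν, MvPolynomial.coeff_zero]
    rw [ha0, map_zero] at ha
    exact hMne ha.symm
  have hMder_ne : Polynomial.derivative M ≠ 0 := by
    intro hd
    have hcd := Polynomial.coeff_derivative M (M.natDegree - 1)
    rw [hd, Polynomial.coeff_zero] at hcd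
    have hn1 : M.natDegree - 1 + 1 = M.natDegree := by omega
    rw [hn1] at hcd
    rcases mul_eq_zero.mp hcd.symm with h1 | h2
    · exact (Polynomial.leadingCoeff_ne_zero.mpr hMne) h1
    · exact Nat.cast_add_one_ne_zero _ h2
  have hu_ne : Polynomial.eval₂ co y0 (Polynomial.derivative M) ≠ 0 := by
    intro h
    exact absurd (hmin _ hMder_ne h)
      (not_le.mpr (Polynomial.natDegree_derivative_lt hMdeg1))
  set u := Polynomial.eval₂ co y0 (Polynomial.derivative M) with hu
  -- minimal total degree in the support of u
  have hune' : ∃ ν, MvPowerSeries.coeff ν u ≠ 0 := by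
    by_contra hh
    push_neg at hh
    exact hu_ne (MvPowerSeries.ext fun ν => by rw [hh ν, map_zero])
  obtain ⟨νe, hνe⟩ := hune'
  obtain ⟨νh, hνhu, hνhdeg⟩ := Nat.sInf_mem (⟨_, νe, hνe, rfl⟩ :
    ({k | ∃ ν, MvPowerSeries.coeff ν u ≠ 0 ∧ (∑ i, ν i) = k} : Set ℕ).Nonempty)
  set h := sInf {k | ∃ ν, MvPowerSeries.coeff ν u ≠ 0 ∧ (∑ i, ν i) = k} with hh
  have hdegmin : ∀ ν, MvPowerSeries.coeff ν u ≠ 0 → h ≤ ∑ i, ν i :=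
    fun ν hν => Nat.sInf_le ⟨ν, hν, rfl⟩
  -- the weights
  set K := h * (h+1)^r + 1 with hK
  set w : Fin r → ℕ := fun i => K + (h+1)^(i:ℕ) with hw
  have hwK : ∀ i, K ≤ w i := fun i => Nat.le_add_right _ _
  have hwle : ∀ i, w i ≤ K + (h+1)^r := fun i =>
    add_le_add_right (Nat.pow_le_pow_right (Nat.succ_le_succ (Nat.zero_le h)) i.2.le) _
  have hWsplit : ∀ ν : Fin r →₀ ℕ,
      eWt w ν = K * (∑ i, ν i) + ∑ i : Fin r, (h+1)^(i:ℕ) * ν i := by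
    intro ν
    rw [eWt, Finset.mul_sum, ← Finset.sum_add_distrib]
    exact Finset.sum_congr rfl fun i _ => by rw [hw]; ring
  have hcode : ∀ ν : Fin r →₀ ℕ, (∑ i, ν i) ≤ h → (∑ i : Fin r, (h+1)^(i:ℕ) * ν i) < K := by
    intro ν hν
    have h1 : (∑ i : Fin r, (h+1)^(i:ℕ) * ν i) ≤ ∑ i, (h+1)^r * ν i :=
      Finset.sum_le_sum fun i _ => Nat.mul_le_mul_right _
        (Nat.pow_le_pow_right (Nat.succ_le_succ (Nat.zero_le h)) i.2.le)
    have h2 : (∑ i, (h+1)^r * ν i) = (h+1)^r * ∑ i, ν i := by rw [Finset.mul_sum]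
    have h3 : (h+1)^r * (∑ i, ν i) ≤ (h+1)^r * h := Nat.mul_le_mul_left _ hν
    have h4 : h * (h+1)^r = (h+1)^r * h := Nat.mul_comm _ _
    rw [hK]
    omega
  have hWgeK : ∀ ν : Fin r →₀ ℕ, K * (∑ i, ν i) ≤ eWt w ν := by
    intro ν
    rw [hWsplit]
    omega
  have hWge1 : ∀ ν : Fin r →₀ ℕ, (∑ i, ν i) ≤ eWt w ν := by
    intro ν
    have := hWgeK ν
    have h2 : (∑ i, ν i) ≤ K * (∑ i, ν i) := Nat.le_mul_of_pos_left _ (by omega)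
    omega
  -- minimal weight point of the support of u
  obtain ⟨n0, hn0u, hn0W⟩ := Nat.sInf_mem (⟨_, νh, hνhu, rfl⟩ :
    ({k | ∃ ν, MvPowerSeries.coeff ν u ≠ 0 ∧ eWt w ν = k} : Set ℕ).Nonempty)
  set Hs := sInf {k | ∃ ν, MvPowerSeries.coeff ν u ≠ 0 ∧ eWt w ν = k} with hHs
  have hHmin : ∀ ν, MvPowerSeries.coeff ν u ≠ 0 → Hs ≤ eWt w ν :=
    fun ν hν => Nat.sInf_le ⟨ν, hν, rfl⟩
  have hHub : Hs < K * (h+1) := by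
    have h1 : Hs ≤ eWt w νh := hHmin _ hνhu
    have h2 : eWt w νh = K * h + ∑ i : Fin r, (h+1)^(i:ℕ) * νh i := by
      rw [hWsplit, hνhdeg]
    have h3 := hcode νh (le_of_eq hνhdeg)
    have : K * (h+1) = K * h + K := by ring
    omega
  have huniq : ∀ ν, MvPowerSeries.coeff ν u ≠ 0 → ν ≠ n0 → Hs + 1 ≤ eWt w ν := by
    intro ν hν hne
    rcases Nat.lt_or_ge (eWt w ν) (Hs + 1) with hlt | hge
    · exfalso
      have hEq : eWt w ν = Hs := le_antisymm (by omega) (hHmin ν hν)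
      -- both ν and n0 have total degree h and equal codes
      have hdegν : (∑ i, ν i) = h := by
        have l1 := hWgeK ν
        have l2 := hdegmin ν hν
        rw [hEq] at l1
        have : (∑ i, ν i) < h + 1 := by
          by_contra hcon
          push_neg at hcon
          have := Nat.mul_le_mul_left K hcon
          omega
        omega
      have hdegn0 : (∑ i, n0 i) = h := by
        have l1 := hWgeK n0
        have l2 := hdegmin n0 hn0u
        rw [hn0W] at l1
        have : (∑ i, n0 i) < h + 1 := by
          by_contra hcon
          push_neg at hcon
          have := Nat.mul_le_mul_left K hcon
          omega
        omega
      have hcodeeq : (∑ i : Fin r, (h+1)^(i:ℕ) * ν i) = ∑ i : Fin r, (h+1)^(i:ℕ) * n0 i := by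
        have e1 := hWsplit ν
        have e2 := hWsplit n0
        rw [hEq, hdegν] at e1
        rw [hn0W, hdegn0] at e2
        omega
      have hbν : ∀ i, ν i ≤ h := by
        intro i
        have : ν i ≤ ∑ j, ν j :=
          Finset.single_le_sum (f := fun j => ν j) (fun _ _ => Nat.zero_le _) (Finset.mem_univ i)
        omega
      have hbn0 : ∀ i, n0 i ≤ h := by
        intro i
        have : n0 i ≤ ∑ j, n0 j :=
          Finset.single_le_sum (f := fun j => n0 j) (fun _ _ => Nat.zero_le _) (Finset.mem_univ i)
        omega
      have hfg := eis_digits h r (fun i => ν i) (fun i => n0 i) hbν hbn0 (by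
        have e1 : ∀ (f : Fin r →₀ ℕ), (∑ i : Fin r, (f i) * (h+1)^(i:ℕ)) = ∑ i : Fin r, (h+1)^(i:ℕ) * f i :=
          fun f => Finset.sum_congr rfl fun i _ => mul_comm _ _
        rw [e1 ν, e1 n0, hcodeeq])
      exact hne (Finsupp.ext fun i => congrFun hfg i)
    · exact hge
  -- truncation
  have hfin : ({ν : Fin r →₀ ℕ | eWt w ν ≤ 2*Hs+1}).Finite := by
    refine (eis_finite r (2*Hs+1)).subset ?_
    intro ν hν i
    simp only [Set.mem_setOf_eq] at hν ⊢
    have h1 : ν i ≤ ∑ j, ν j :=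
      Finset.single_le_sum (f := fun j => ν j) (fun _ _ => Nat.zero_le _) (Finset.mem_univ i)
    have h2 := hWge1 ν
    omega
  set F := hfin.toFinset with hF
  have hFmem : ∀ ν, ν ∈ F ↔ eWt w ν ≤ 2*Hs+1 := fun ν => hfin.mem_toFinset
  set T : MvPolynomial (Fin r) ℚ :=
    ∑ ν ∈ F, MvPolynomial.monomial ν (MvPowerSeries.coeff ν y0) with hT
  have hTcoeff : ∀ ν, MvPolynomial.coeff ν T
      = if eWt w ν ≤ 2*Hs+1 then MvPowerSeries.coeff ν y0 else 0 := by
    intro ν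
    rw [hT, MvPolynomial.coeff_sum]
    have he : ∀ b ∈ F, MvPolynomial.coeff ν (MvPolynomial.monomial b (MvPowerSeries.coeff b y0))
        = if b = ν then MvPowerSeries.coeff b y0 else 0 :=
      fun b _ => MvPolynomial.coeff_monomial ν b _
    rw [Finset.sum_congr rfl he, Finset.sum_ite_eq' F ν (fun b => MvPowerSeries.coeff b y0)]
    by_cases hν : eWt w ν ≤ 2*Hs+1
    · rw [if_pos ((hFmem ν).mpr hν), if_pos hν]
    · rw [if_neg (fun hc => hν ((hFmem ν).mp hc)), if_neg hν]
  set z : MvPowerSeries (Fin r) ℚ := y0 - (T : MvPowerSeries (Fin r) ℚ) with hz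
  have hzcoeff : ∀ ν, MvPowerSeries.coeff ν z
      = MvPowerSeries.coeff ν y0 - MvPolynomial.coeff ν T := by
    intro ν
    rw [hz, map_sub, MvPolynomial.coeff_coe]
  have hz0 : ∀ ν, eWt w ν ≤ 2*Hs+1 → MvPowerSeries.coeff ν z = 0 := by
    intro ν hν
    rw [hzcoeff, hTcoeff, if_pos hν, sub_self]
  have hzbig : ∀ ν, ¬(eWt w ν ≤ 2*Hs+1) →
      MvPowerSeries.coeff ν z = MvPowerSeries.coeff ν y0 := by
    intro ν hν
    rw [hzcoeff, hTcoeff, if_neg hν, sub_zero]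
  -- the shifted polynomial
  set Q : Polynomial (MvPolynomial (Fin r) ℚ) := M.comp (Polynomial.X + Polynomial.C T) with hQ
  have hQz : Polynomial.eval₂ co z Q = 0 := by
    rw [hQ, Polynomial.eval₂_comp]
    have hXCT : Polynomial.eval₂ co z (Polynomial.X + Polynomial.C T) = y0 := by
      rw [Polynomial.eval₂_add, Polynomial.eval₂_X, Polynomial.eval₂_C, hz]
      have : co T = (T : MvPowerSeries (Fin r) ℚ) := rfl
      rw [this, sub_add_cancel]
    rw [hXCT]
    exact hM0
  have hQ1 : Q.coeff 1 = Polynomial.eval T (Polynomial.derivative M) := by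
    have h1 : (Polynomial.derivative Q).coeff 0 = Q.coeff 1 := by
      rw [Polynomial.coeff_derivative]
      push_cast
      rw [zero_add, mul_one]
    rw [← h1, hQ, Polynomial.derivative_comp, Polynomial.coeff_zero_eq_eval_zero]
    simp [Polynomial.eval_comp]
  -- q1 agrees with u in low weight
  have hq1u : ∀ ν, eWt w ν ≤ 2*Hs+1 →
      MvPolynomial.coeff ν (Q.coeff 1) = MvPowerSeries.coeff ν u := by
    intro ν hν
    obtain ⟨G, hG⟩ : ((T : MvPowerSeries (Fin r) ℚ) - y0) ∣
        ((Q.coeff 1 : MvPolynomial (Fin r) ℚ) : MvPowerSeries (Fin r) ℚ) - u := by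
      have h1 : ((Q.coeff 1 : MvPolynomial (Fin r) ℚ) : MvPowerSeries (Fin r) ℚ)
          = Polynomial.eval (T : MvPowerSeries (Fin r) ℚ)
            ((Polynomial.derivative M).map co) := by
        rw [hQ1, ← Polynomial.eval₂_eq_eval_map]
        exact (Polynomial.eval₂_at_apply co T).symm
      have h2 : u = Polynomial.eval y0 ((Polynomial.derivative M).map co) := by
        rw [hu, Polynomial.eval₂_eq_eval_map]
      rw [h1, h2]
      exact Polynomial.sub_dvd_eval_sub _ _ _
    have hzero : MvPowerSeries.coeff ν
        (((Q.coeff 1 : MvPolynomial (Fin r) ℚ) : MvPowerSeries (Fin r) ℚ) - u) = 0 := by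
      rw [hG, MvPowerSeries.coeff_mul]
      refine Finset.sum_eq_zero fun p hp => ?_
      rw [Finset.HasAntidiagonal.mem_antidiagonal] at hp
      have hWp : eWt w p.1 ≤ 2*Hs+1 := by
        have : eWt w p.1 + eWt w p.2 = eWt w ν := by rw [← eWt_add, hp]
        omega
      have hc : MvPowerSeries.coeff p.1 ((T : MvPowerSeries (Fin r) ℚ) - y0) = 0 := by
        rw [map_sub, MvPolynomial.coeff_coe, hTcoeff, if_pos hWp, sub_self]
      rw [hc, zero_mul]
    rw [map_sub, MvPolynomial.coeff_coe] at hzero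
    linarith [hzero]
  have hc0 : MvPolynomial.coeff n0 (Q.coeff 1) ≠ 0 := by
    rw [hq1u n0 (by rw [hn0W]; omega)]
    exact hn0u
  have hq1supp : ∀ a, MvPolynomial.coeff a (Q.coeff 1) ≠ 0 → a ≠ n0 → Hs + 1 ≤ eWt w a := by
    intro a ha hne
    by_cases hle : eWt w a ≤ 2*Hs+1
    · exact huniq a (by rw [← hq1u a hle]; exact ha) hne
    · omega
  -- clearing denominators
  set D := Q.natDegree with hD
  have hD1 : 1 ≤ D := by
    rw [hD, hQ, Polynomial.natDegree_comp, Polynomial.natDegree_X_add_C, mul_one]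
    omega
  have hden : ∀ (q : MvPolynomial (Fin r) ℚ) (a : Fin r →₀ ℕ),
      (MvPolynomial.coeff a q).den ∣ ∏ b ∈ q.support, (MvPolynomial.coeff b q).den := by
    intro q a
    by_cases ha : a ∈ q.support
    · exact Finset.dvd_prod_of_mem _ ha
    · rw [MvPolynomial.notMem_support_iff.mp ha]
      exact one_dvd _
  set N := ∏ i ∈ Finset.range (D+1), ∏ b ∈ (Q.coeff i).support, (MvPolynomial.coeff b (Q.coeff i)).den with hN
  have hNpos : 0 < N := Finset.prod_pos fun i _ => Finset.prod_pos fun b _ => (MvPolynomial.coeff b (Q.coeff i)).pos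
  have hNint : ∀ i ∈ Finset.range (D+1), ∀ a, ∃ t : ℤ,
      (N:ℚ) * MvPolynomial.coeff a (Q.coeff i) = t := by
    intro i hi a
    exact eis_den_dvd _ _ ((hden (Q.coeff i) a).trans (Finset.dvd_prod_of_mem _ hi))
  obtain ⟨C0, hC0⟩ := hNint 1 (Finset.mem_range.mpr (by omega)) n0
  have hC0ne : C0 ≠ 0 := by
    intro hc
    rw [hc, Int.cast_zero] at hC0
    rcases mul_eq_zero.mp hC0 with h1 | h2
    · exact absurd h1 (by positivity)
    · exact hc0 h2
  set E := C0.natAbs with hE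
  have hE1 : 1 ≤ E := Int.natAbs_pos.mpr hC0ne
  have hC0dvdE : C0 ∣ (E:ℤ) := Int.dvd_natAbs.mpr dvd_rfl
  -- the master equation
  have heq : ∀ μ, ∑ i ∈ Finset.range (D+1), ∑ p ∈ Finset.HasAntidiagonal.antidiagonal μ,
      MvPolynomial.coeff p.1 (Q.coeff i) * MvPowerSeries.coeff p.2 (z^i) = 0 := by
    intro μ
    have hcg := congrArg (MvPowerSeries.coeff μ) hQz
    rw [Polynomial.eval₂_eq_sum_range, map_sum, map_zero] at hcg
    rw [← hcg, ← hD]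
    refine Finset.sum_congr rfl fun i _ => ?_
    rw [MvPowerSeries.coeff_mul]
    refine Finset.sum_congr rfl fun p _ => ?_
    have : co (Q.coeff i) = ((Q.coeff i : MvPolynomial (Fin r) ℚ) : MvPowerSeries (Fin r) ℚ) := rfl
    rw [this, MvPolynomial.coeff_coe]
  -- main induction on the weight
  have main : ∀ m (ν : Fin r →₀ ℕ), eWt w ν = m → ∃ t : ℤ,
      (E:ℚ)^(eWt w ν) * MvPowerSeries.coeff ν z = (E:ℚ)^(Hs+1) * t := by
    intro m
    induction m using Nat.strong_induction_on with
    | _ m IHm =>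
    intro ν hνm
    by_cases hsm : eWt w ν ≤ 2*Hs+1
    · exact ⟨0, by rw [hz0 ν hsm]; push_cast; ring⟩
    push_neg at hsm
    subst hνm
    have IH' : ∀ b, eWt w b < eWt w ν → ∃ t : ℤ,
        (E:ℚ)^(eWt w b) * MvPowerSeries.coeff b z = (E:ℚ)^(Hs+1) * t :=
      fun b hb => IHm _ hb b rfl
    set μ := ν + n0 with hμ
    have hμW : eWt w μ = eWt w ν + Hs := by rw [hμ, eWt_add, hn0W]
    have hterm : ∀ i ∈ Finset.range (D+1), ∀ p ∈ Finset.HasAntidiagonal.antidiagonal μ,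
        ¬(i = 1 ∧ p = (n0, ν)) → ∃ t : ℤ,
        (N:ℚ) * (E:ℚ)^(eWt w ν) *
          (MvPolynomial.coeff p.1 (Q.coeff i) * MvPowerSeries.coeff p.2 (z^i))
        = (C0:ℚ) * (E:ℚ)^(Hs+1) * t := by
      intro i hi p hp hne
      rw [Finset.HasAntidiagonal.mem_antidiagonal] at hp
      have hpW : eWt w p.1 + eWt w p.2 = eWt w ν + Hs := by rw [← eWt_add, hp, hμW]
      obtain ⟨ta, hta⟩ := hNint i hi p.1
      rcases Nat.lt_or_ge i 2 with hi2 | hi2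
      · interval_cases i
        · -- constant term
          by_cases hp2 : p.2 = 0
          · obtain ⟨k, hk⟩ : C0 ∣ (E:ℤ)^(eWt w ν - (Hs+1)) := dvd_pow hC0dvdE (by omega)
            refine ⟨k * ta, ?_⟩
            have hEpow : (E:ℚ)^(eWt w ν) = (E:ℚ)^(Hs+1) * (E:ℚ)^(eWt w ν - (Hs+1)) := by
              rw [← pow_add]; congr 1; omega
            have hEd : ((E:ℚ))^(eWt w ν - (Hs+1)) = (C0:ℚ) * (k:ℚ) := by
              exact_mod_cast congrArg (Int.cast : ℤ → ℚ) hk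
            rw [pow_zero, MvPowerSeries.coeff_one, if_pos hp2, mul_one, hEpow]
            calc (N:ℚ) * ((E:ℚ)^(Hs+1) * (E:ℚ)^(eWt w ν - (Hs+1))) * MvPolynomial.coeff p.1 (Q.coeff 0)
                = ((N:ℚ) * MvPolynomial.coeff p.1 (Q.coeff 0)) * ((E:ℚ)^(Hs+1) * (E:ℚ)^(eWt w ν - (Hs+1))) := by ring
              _ = (ta:ℚ) * ((E:ℚ)^(Hs+1) * ((C0:ℚ) * (k:ℚ))) := by rw [hta, hEd]
              _ = (C0:ℚ) * (E:ℚ)^(Hs+1) * ((k * ta : ℤ) : ℚ) := by push_cast; ring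
          · refine ⟨0, ?_⟩
            rw [pow_zero, MvPowerSeries.coeff_one, if_neg hp2]
            push_cast; ring
        · -- linear term
          have hp1ne : p.1 ≠ n0 := by
            intro hc
            apply hne
            refine ⟨rfl, ?_⟩
            have : p.2 = ν := by
              have h1 : n0 + p.2 = ν + n0 := by rw [hμ, hc] at hp; exact hp
              have h2 : n0 + p.2 = n0 + ν := by rw [h1, add_comm ν n0]
              exact add_left_cancel h2
            exact Prod.ext hc this
          by_cases hq : MvPolynomial.coeff p.1 (Q.coeff 1) = 0
          · exact ⟨0, by rw [hq]; push_cast; ring⟩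
          have hWa : Hs + 1 ≤ eWt w p.1 := hq1supp p.1 hq hp1ne
          have hWb : eWt w p.2 < eWt w ν := by omega
          obtain ⟨t1, ht1⟩ := IH' p.2 hWb
          obtain ⟨k, hk⟩ : C0 ∣ (E:ℤ)^(eWt w ν - eWt w p.2) := dvd_pow hC0dvdE (by omega)
          refine ⟨k * ta * t1, ?_⟩
          rw [pow_one]
          have hEpow : (E:ℚ)^(eWt w ν)
              = (E:ℚ)^(eWt w ν - eWt w p.2) * (E:ℚ)^(eWt w p.2) := by
            rw [← pow_add]; congr 1; omega
          have hEd : ((E:ℚ))^(eWt w ν - eWt w p.2) = (C0:ℚ) * (k:ℚ) := by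
            exact_mod_cast congrArg (Int.cast : ℤ → ℚ) hk
          calc (N:ℚ) * (E:ℚ)^(eWt w ν) * (MvPolynomial.coeff p.1 (Q.coeff 1) * MvPowerSeries.coeff p.2 z)
              = ((N:ℚ) * MvPolynomial.coeff p.1 (Q.coeff 1)) * (E:ℚ)^(eWt w ν - eWt w p.2)
                * ((E:ℚ)^(eWt w p.2) * MvPowerSeries.coeff p.2 z) := by rw [hEpow]; ring
            _ = (ta:ℚ) * ((C0:ℚ) * (k:ℚ)) * ((E:ℚ)^(Hs+1) * (t1:ℚ)) := by rw [hta, hEd, ht1]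
            _ = (C0:ℚ) * (E:ℚ)^(Hs+1) * ((k * ta * t1 : ℤ) : ℚ) := by push_cast; ring
      · -- higher order terms
        by_cases hord : eWt w p.2 < i * (2*Hs+1+1)
        · exact ⟨0, by rw [eis_order w z (2*Hs+1) hz0 i p.2 hord]; push_cast; ring⟩
        push_neg at hord
        have hble : eWt w p.2 ≤ eWt w ν + Hs := by omega
        obtain ⟨sb, hsb⟩ := eis_pow w z E Hs (eWt w ν) hE1 hz0 IH' i hi2 p.2 hble
        have hii : 2 * (Hs+1) ≤ (Hs+1) * i := by
          calc 2 * (Hs+1) = (Hs+1) * 2 := by ring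
            _ ≤ (Hs+1) * i := Nat.mul_le_mul_left _ hi2
        set k := eWt w ν + (Hs+1)*i - eWt w p.2 with hkdef
        have hkge : Hs + 2 ≤ k := by omega
        have hE0 : (E:ℚ) ≠ 0 := Nat.cast_ne_zero.mpr (by omega)
        have hcalc : (E:ℚ)^(eWt w ν) * MvPowerSeries.coeff p.2 (z^i) = (E:ℚ)^k * sb := by
          apply mul_left_cancel₀ (pow_ne_zero (eWt w p.2) hE0)
          have hexp : eWt w p.2 + (eWt w ν + (Hs+1)*i) = eWt w p.2 + (eWt w p.2 + k) := by omega
          calc (E:ℚ)^(eWt w p.2) * ((E:ℚ)^(eWt w ν) * MvPowerSeries.coeff p.2 (z^i))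
              = (E:ℚ)^(eWt w ν) * ((E:ℚ)^(eWt w p.2) * MvPowerSeries.coeff p.2 (z^i)) := by ring
            _ = (E:ℚ)^(eWt w ν) * ((E:ℚ)^((Hs+1)*i) * sb) := by rw [hsb]
            _ = (E:ℚ)^(eWt w p.2) * ((E:ℚ)^k * sb) := by
                rw [← mul_assoc, ← pow_add, ← mul_assoc, ← pow_add]
                congr 2
                omega
        obtain ⟨k2, hk2⟩ : C0 ∣ (E:ℤ)^(k - (Hs+1)) := dvd_pow hC0dvdE (by omega)
        refine ⟨k2 * ta * sb, ?_⟩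
        have hEpow : (E:ℚ)^k = (E:ℚ)^(Hs+1) * (E:ℚ)^(k-(Hs+1)) := by
          rw [← pow_add]; congr 1; omega
        have hEd : ((E:ℚ))^(k - (Hs+1)) = (C0:ℚ) * (k2:ℚ) := by
          exact_mod_cast congrArg (Int.cast : ℤ → ℚ) hk2
        calc (N:ℚ) * (E:ℚ)^(eWt w ν) * (MvPolynomial.coeff p.1 (Q.coeff i) * MvPowerSeries.coeff p.2 (z^i))
            = ((N:ℚ) * MvPolynomial.coeff p.1 (Q.coeff i)) * ((E:ℚ)^(eWt w ν) * MvPowerSeries.coeff p.2 (z^i)) := by ring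
          _ = (ta:ℚ) * ((E:ℚ)^k * sb) := by rw [hta, hcalc]
          _ = (ta:ℚ) * (((E:ℚ)^(Hs+1) * ((C0:ℚ)*(k2:ℚ))) * sb) := by rw [hEpow, hEd]
          _ = (C0:ℚ) * (E:ℚ)^(Hs+1) * ((k2 * ta * sb : ℤ) : ℚ) := by push_cast; ring
    -- assemble
    have h1mem : (1:ℕ) ∈ Finset.range (D+1) := Finset.mem_range.mpr (by omega)
    have hpmem : ((n0, ν) : (Fin r →₀ ℕ) × (Fin r →₀ ℕ)) ∈ Finset.HasAntidiagonal.antidiagonal μ :=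
      Finset.HasAntidiagonal.mem_antidiagonal.mpr (by rw [hμ, add_comm])
    have heqN : ∑ i ∈ Finset.range (D+1), ∑ p ∈ Finset.HasAntidiagonal.antidiagonal μ,
        (N:ℚ) * (E:ℚ)^(eWt w ν) *
          (MvPolynomial.coeff p.1 (Q.coeff i) * MvPowerSeries.coeff p.2 (z^i)) = 0 := by
      simp only [← Finset.mul_sum]
      rw [heq μ, mul_zero]
    obtain ⟨t1, ht1⟩ : ∃ t : ℤ, ∑ p ∈ (Finset.HasAntidiagonal.antidiagonal μ).erase (n0, ν),
        (N:ℚ) * (E:ℚ)^(eWt w ν) *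
          (MvPolynomial.coeff p.1 (Q.coeff 1) * MvPowerSeries.coeff p.2 (z^1))
        = ((C0:ℚ) * (E:ℚ)^(Hs+1)) * t := by
      apply eis_int_sum
      intro p hp
      exact hterm 1 h1mem p (Finset.mem_of_mem_erase hp)
        (fun hcon => (Finset.ne_of_mem_erase hp) hcon.2)
    obtain ⟨t2, ht2⟩ : ∃ t : ℤ, ∑ i ∈ (Finset.range (D+1)).erase 1,
        ∑ p ∈ Finset.HasAntidiagonal.antidiagonal μ, (N:ℚ) * (E:ℚ)^(eWt w ν) *
          (MvPolynomial.coeff p.1 (Q.coeff i) * MvPowerSeries.coeff p.2 (z^i))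
        = ((C0:ℚ) * (E:ℚ)^(Hs+1)) * t := by
      apply eis_int_sum
      intro i hi
      apply eis_int_sum
      intro p hp
      exact hterm i (Finset.mem_of_mem_erase hi) p hp
        (fun hcon => (Finset.ne_of_mem_erase hi) hcon.1)
    rw [← Finset.add_sum_erase _ _ h1mem, ← Finset.add_sum_erase _ _ hpmem, ht1, ht2] at heqN
    have hterm0 : (N:ℚ) * (E:ℚ)^(eWt w ν) *
        (MvPolynomial.coeff (n0, ν).1 (Q.coeff 1) * MvPowerSeries.coeff (n0, ν).2 (z^1))
        = (C0:ℚ) * ((E:ℚ)^(eWt w ν) * MvPowerSeries.coeff ν z) := by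
      calc (N:ℚ) * (E:ℚ)^(eWt w ν) *
          (MvPolynomial.coeff (n0, ν).1 (Q.coeff 1) * MvPowerSeries.coeff (n0, ν).2 (z^1))
          = ((N:ℚ) * MvPolynomial.coeff n0 (Q.coeff 1)) *
            ((E:ℚ)^(eWt w ν) * MvPowerSeries.coeff ν (z^1)) := by ring
        _ = (C0:ℚ) * ((E:ℚ)^(eWt w ν) * MvPowerSeries.coeff ν z) := by rw [hC0, pow_one]
    rw [hterm0] at heqN
    refine ⟨-(t1+t2), ?_⟩
    have hC0Q : (C0:ℚ) ≠ 0 := Int.cast_ne_zero.mpr hC0ne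
    apply mul_left_cancel₀ hC0Q
    push_cast
    linarith [heqN]
  -- final assembly
  set Wm := K + (h+1)^r with hWm
  have hWmle : ∀ ν : Fin r →₀ ℕ, eWt w ν ≤ Wm * (∑ i, ν i) := by
    intro ν
    rw [eWt, Finset.mul_sum]
    exact Finset.sum_le_sum fun i _ => Nat.mul_le_mul_right _ (hwle i)
  set δ0 := ∏ ν ∈ F, (MvPowerSeries.coeff ν y0).den with hδ0
  have hδ0pos : 0 < δ0 := Finset.prod_pos fun ν _ => (MvPowerSeries.coeff ν y0).pos
  have hδpos : 0 < E^Wm := Nat.pow_pos (by omega)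
  refine ⟨δ0, E^Wm, hδ0pos, hδpos, ?_⟩
  intro n
  by_cases hn : eWt w n ≤ 2*Hs+1
  · -- low-weight coefficients: handled by δ0
    have hdvd : (MvPowerSeries.coeff n y0).den ∣ δ0 :=
      Finset.dvd_prod_of_mem _ ((hFmem n).mpr hn)
    obtain ⟨t, ht⟩ := eis_den_dvd _ _ hdvd
    refine ⟨t * (E:ℤ)^(Wm * ∑ i, n i), ?_⟩
    have hcast : ((E^Wm : ℕ) : ℚ)^(∑ i, n i) = (E:ℚ)^(Wm * ∑ i, n i) := by
      push_cast
      rw [← pow_mul]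
    rw [hcast]
    push_cast
    rw [← ht]
    ring
  · -- high-weight coefficients: main estimate
    obtain ⟨t, ht⟩ := main (eWt w n) n rfl
    rw [hzbig n hn] at ht
    have hWle : eWt w n ≤ Wm * ∑ i, n i := hWmle n
    refine ⟨(δ0:ℤ) * (E:ℤ)^(Wm * (∑ i, n i) - eWt w n) * (E:ℤ)^(Hs+1) * t, ?_⟩
    have hcast : ((E^Wm : ℕ) : ℚ)^(∑ i, n i) = (E:ℚ)^(Wm * ∑ i, n i) := by
      push_cast
      rw [← pow_mul]
    rw [hcast]
    have hsplitE : (E:ℚ)^(Wm * ∑ i, n i)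
        = (E:ℚ)^(Wm * (∑ i, n i) - eWt w n) * (E:ℚ)^(eWt w n) := by
      rw [← pow_add]
      congr 1
      omega
    rw [hsplitE]
    push_cast
    calc (δ0:ℚ) * ((E:ℚ)^(Wm * (∑ i, n i) - eWt w n) * (E:ℚ)^(eWt w n)) * MvPowerSeries.coeff n y0
        = (δ0:ℚ) * (E:ℚ)^(Wm * (∑ i, n i) - eWt w n) * ((E:ℚ)^(eWt w n) * MvPowerSeries.coeff n y0) := by ring
      _ = (δ0:ℚ) * (E:ℚ)^(Wm * (∑ i, n i) - eWt w n) * ((E:ℚ)^(Hs+1) * t) := by rw [ht]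
      _ = (δ0:ℚ) * (E:ℚ)^(Wm * (∑ i, n i) - eWt w n) * (E:ℚ)^(Hs+1) * t := by ring
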